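/- The second moment of the q-Bernoulli distribution: ∑_{κ=0}^{n} [κ]_q^2 [n choose κ]_q p^κ ∏_{i=0}^{n-κ-1}(1 - p q^i) = [n]_q p + q p^2 [n]_q [n-1]_q. -/
import Mathlib


/-- The `q`-analog `[n]_q = 1 + q + ⋯ + q^(n-1)` of a natural number. -/
def qNum {R : Type*} [CommRing R] (q : R) (n : ℕ) : R := ∑ i ∈ Finset.range n, q ^ i

/-- The `q`-factorial `[n]! = [1][2]⋯[n]`. -/
def qFact {R : Type*} [CommRing R] (q : R) (n : ℕ) : R := ∏ i ∈ Finset.range n, qNum q (i + 1)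

/-- The Gaussian (`q`-)binomial coefficient, via the `q`-Pascal recursion. -/
def qBinom {R : Type*} [CommRing R] (q : R) : ℕ → ℕ → R
  | _, 0 => 1
  | 0, _ + 1 => 0
  | n + 1, k + 1 => qBinom q n k + q ^ (k + 1) * qBinom q n (k + 1)

/-- The `q`-shifted product `(1 −· p)^m = ∏_{i=0}^{m-1} (1 - p q^i)`. -/
def qProdSub {R : Type*} [CommRing R] (q p : R) (m : ℕ) : R :=
  ∏ i ∈ Finset.range m, (1 - p * q ^ i)

/-- The `q`-shifted power `(x +· y)^m = ∏_{i=0}^{m-1} (x + q^i y)`. -/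
def qProdAdd {R : Type*} [CommRing R] (q x y : R) (m : ℕ) : R :=
  ∏ i ∈ Finset.range m, (x + q ^ i * y)
section Aux
variable {F : Type*} [Field F]

lemma qNum_succ (q : F) (n : ℕ) : qNum q (n+1) = 1 + q * qNum q n := by
  simp [qNum, Finset.sum_range_succ', pow_succ, Finset.mul_sum, add_comm, mul_comm]

lemma qBinom_zero_right (q : F) (n : ℕ) : qBinom q n 0 = 1 := by
  cases n <;> rfl

lemma qBinom_of_lt (q : F) : ∀ n k, n < k → qBinom q n k = 0 := by
  intro n
  induction n with
  | zero => intro k h; match k, h with | k+1, _ => rfl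
  | succ n ih =>
    intro k h
    match k, h with
    | k+1, h =>
      have h1 : n < k := by omega
      have h2 : n < k+1 := by omega
      show qBinom q n k + q ^ (k + 1) * qBinom q n (k + 1) = 0
      rw [ih k h1, ih (k+1) h2]; ring

lemma qBinom_succ (q : F) (n κ : ℕ) :
    qBinom q (n+1) κ = (if κ = 0 then 0 else qBinom q n (κ-1)) + q^κ * qBinom q n κ := by
  match κ with
  | 0 => simp [qBinom_zero_right]
  | k+1 => simp [qBinom]

lemma qProdSub_succ (q p : F) (m : ℕ) :
    qProdSub q p (m+1) = (1-p) * qProdSub q (p*q) m := by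
  rw [qProdSub, Finset.prod_range_succ', qProdSub]
  simp [pow_succ, mul_comm, mul_assoc, mul_left_comm]

lemma sum_rec (q : F) (w : ℕ → F) (n : ℕ) (p : F) :
    ∑ κ ∈ Finset.range (n+2), w κ * qBinom q (n+1) κ * p^κ * qProdSub q p (n+1-κ)
  = p * ∑ j ∈ Finset.range (n+1), w (j+1) * qBinom q n j * p^j * qProdSub q p (n-j)
    + (1-p) * ∑ κ ∈ Finset.range (n+1), w κ * qBinom q n κ * (p*q)^κ * qProdSub q (p*q) (n-κ) := by
  have step : ∀ κ ∈ Finset.range (n+2),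
      w κ * qBinom q (n+1) κ * p^κ * qProdSub q p (n+1-κ)
      = (if κ = 0 then 0 else w κ * qBinom q n (κ-1) * p^κ * qProdSub q p (n+1-κ))
        + w κ * (q^κ * qBinom q n κ) * p^κ * qProdSub q p (n+1-κ) := by
    intro κ _
    rw [qBinom_succ]
    by_cases h : κ = 0 <;> simp [h] <;> ring
  rw [Finset.sum_congr rfl step, Finset.sum_add_distrib]
  congr 1
  · rw [Finset.sum_range_succ']
    rw [if_pos rfl, add_zero, Finset.mul_sum]
    refine Finset.sum_congr rfl fun j hj => ?_
    have h1 : n + 1 - (j+1) = n - j := by omega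
    rw [if_neg (Nat.succ_ne_zero j), h1, Nat.add_sub_cancel]
    ring
  · rw [Finset.sum_range_succ, qBinom_of_lt q n (n+1) (by omega)]
    simp only [Finset.mul_sum]
    simp only [mul_zero, zero_mul, add_zero]
    refine Finset.sum_congr rfl fun κ hκ => ?_
    rw [Finset.mem_range] at hκ
    have h1 : n + 1 - κ = (n - κ) + 1 := by omega
    rw [h1, qProdSub_succ, mul_pow]
    ring

lemma moment0 (q : F) : ∀ (n : ℕ) (p : F),
    ∑ κ ∈ Finset.range (n+1), qBinom q n κ * p^κ * qProdSub q p (n-κ) = 1 := by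
  intro n
  induction n with
  | zero => intro p; simp [qBinom_zero_right, qProdSub]
  | succ n ih =>
    intro p
    have h := sum_rec q (fun _ => 1) n p
    simp only [one_mul] at h
    rw [show n + 1 + 1 = n + 2 from rfl, h, ih p, ih (p*q)]
    ring

lemma moment1 (q : F) : ∀ (n : ℕ) (p : F),
    ∑ κ ∈ Finset.range (n+1), qNum q κ * qBinom q n κ * p^κ * qProdSub q p (n-κ)
      = qNum q n * p := by
  intro n
  induction n with
  | zero => intro p; simp [qNum, qBinom_zero_right, qProdSub]
  | succ n ih =>
    intro p
    have h := sum_rec q (fun κ => qNum q κ) n p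
    rw [show n + 1 + 1 = n + 2 from rfl, h]
    have expand : ∑ j ∈ Finset.range (n+1), qNum q (j+1) * qBinom q n j * p^j * qProdSub q p (n-j)
        = (∑ j ∈ Finset.range (n+1), qBinom q n j * p^j * qProdSub q p (n-j))
          + q * ∑ j ∈ Finset.range (n+1), qNum q j * qBinom q n j * p^j * qProdSub q p (n-j) := by
      rw [Finset.mul_sum, ← Finset.sum_add_distrib]
      refine Finset.sum_congr rfl fun j _ => ?_
      rw [qNum_succ]; ring
    rw [expand, moment0, ih p, ih (p*q), qNum_succ]
    ring

lemma moment2 (q : F) : ∀ (n : ℕ) (p : F),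
    ∑ κ ∈ Finset.range (n+1), (qNum q κ)^2 * qBinom q n κ * p^κ * qProdSub q p (n-κ)
      = qNum q n * p + q * p^2 * qNum q n * qNum q (n-1) := by
  intro n
  induction n with
  | zero => intro p; simp [qNum, qBinom_zero_right, qProdSub]
  | succ n ih =>
    intro p
    have h := sum_rec q (fun κ => (qNum q κ)^2) n p
    rw [show n + 1 + 1 = n + 2 from rfl, h]
    have expand : ∑ j ∈ Finset.range (n+1), (qNum q (j+1))^2 * qBinom q n j * p^j * qProdSub q p (n-j)
        = (∑ j ∈ Finset.range (n+1), qBinom q n j * p^j * qProdSub q p (n-j))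
          + 2 * q * (∑ j ∈ Finset.range (n+1), qNum q j * qBinom q n j * p^j * qProdSub q p (n-j))
          + q^2 * ∑ j ∈ Finset.range (n+1), (qNum q j)^2 * qBinom q n j * p^j * qProdSub q p (n-j) := by
      rw [Finset.mul_sum, Finset.mul_sum, ← Finset.sum_add_distrib, ← Finset.sum_add_distrib]
      refine Finset.sum_congr rfl fun j _ => ?_
      rw [qNum_succ]; ring
    rw [expand, moment0, moment1, ih p, ih (p*q), Nat.add_sub_cancel]
    have key : (qNum q n)^2 = qNum q n + q * qNum q n * qNum q (n-1) := by
      cases n with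
      | zero => simp [qNum]
      | succ m =>
        rw [Nat.add_sub_cancel, qNum_succ]; ring
    rw [qNum_succ]
    linear_combination (-(q^2 * p^2)) * key

end Aux

/-- Second moment of the q-Bernoulli distribution (2.18):
`∑ [κ]^2 [n choose κ] p^κ (1 −· p)^{n-κ} = [n] p + q p^2 [n] [n-1]`. -/
theorem qBernoulli_second_moment {F : Type*} [Field F] (q p : F) (hq : q ≠ 1)
    (n : ℕ) (hn : 1 ≤ n) :
    ∑ κ ∈ Finset.range (n + 1), (qNum q κ) ^ 2 * qBinom q n κ * p ^ κ * qProdSub q p (n - κ) =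
      qNum q n * p + q * p ^ 2 * qNum q n * qNum q (n - 1) := by
  exact moment2 q n p
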